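/- The idempotent-generated submonoid of T_n (n ≥ 2) equals (T_n \ S_n) ∪ {id}, i.e. a transformation is a product of idempotents if and only if it is the identity or not a permutation. -/

import Mathlib

namespace HowieAux

variable {n : ℕ}

/-- The idempotent-generated submonoid. -/
private def M (n : ℕ) : Submonoid (Function.End (Fin n)) :=
  Submonoid.closure {e : Function.End (Fin n) | e * e = e}

/-- The elementary collapsing `i ↦ j`, fixing everything else. -/
private def E (i j : Fin n) : Function.End (Fin n) := Function.update id i j

lemma mul_apply (a b : Function.End (Fin n)) (t : Fin n) : (a * b) t = a (b t) := rfl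

lemma E_apply (i j t : Fin n) : E i j t = if t = i then j else t := by
  simp [E, Function.update_apply]

/-- A permutation viewed as an element of `Function.End`. -/
private def P (σ : Equiv.Perm (Fin n)) : Function.End (Fin n) := ⇑σ

lemma P_apply (σ : Equiv.Perm (Fin n)) (t : Fin n) : P σ t = σ t := rfl

lemma E_mem (i j : Fin n) : E i j ∈ M n := by
  apply Submonoid.subset_closure
  show E i j * E i j = E i j
  funext t
  rw [mul_apply]
  simp only [E_apply]
  split_ifs with h1 h2 <;> simp_all

lemma swap_mul_mem {g : Function.End (Fin n)} (hg : g ∈ M n)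
    (hs : ¬ Function.Surjective g) (x y : Fin n) :
    P (Equiv.swap x y) * g ∈ M n := by
  unfold Function.Surjective at hs
  push_neg at hs
  obtain ⟨z, hz⟩ := hs
  have key : ∀ h : Function.End (Fin n), h ∈ M n →
      (∀ t : Fin n, t ≠ z → h t = Equiv.swap x y t) →
      P (Equiv.swap x y) * g ∈ M n := by
    intro h hh hagree
    have : P (Equiv.swap x y) * g = h * g := by
      funext t
      rw [mul_apply, mul_apply, hagree (g t) (hz t)]
      rfl
    rw [this]
    exact mul_mem hh hg
  by_cases hzx : z = x
  · refine key (E y x) (E_mem y x) ?_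
    intro t ht
    rw [E_apply]
    by_cases hty : t = y
    · simp [hty, Equiv.swap_apply_right]
    · rw [if_neg hty, Equiv.swap_apply_of_ne_of_ne (hzx ▸ ht) hty]
  by_cases hzy : z = y
  · refine key (E x y) (E_mem x y) ?_
    intro t ht
    rw [E_apply]
    by_cases htx : t = x
    · simp [htx, Equiv.swap_apply_left]
    · rw [if_neg htx, Equiv.swap_apply_of_ne_of_ne htx (hzy ▸ ht)]
  · refine key (E z y * (E y x * E x z)) (mul_mem (E_mem z y) (mul_mem (E_mem y x) (E_mem x z))) ?_
    intro t ht
    simp only [mul_apply, E_apply]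
    by_cases htx : t = x
    · simp [htx, hzy, Ne.symm hzy, Equiv.swap_apply_left]
    by_cases hty : t = y
    · have hyx : y ≠ x := hty ▸ htx
      simp [htx, hty, hyx, hzx, Ne.symm hzx, Equiv.swap_apply_right]
    · simp [htx, hty, ht, Equiv.swap_apply_of_ne_of_ne htx hty]

lemma perm_mul_mem (σ : Equiv.Perm (Fin n)) {g : Function.End (Fin n)} (hg : g ∈ M n)
    (hs : ¬ Function.Surjective g) :
    P σ * g ∈ M n := by
  refine Equiv.Perm.swap_induction_on σ ?_ ?_
  · have : P (1 : Equiv.Perm (Fin n)) * g = g := by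
      funext t; rw [mul_apply]; simp [P_apply]
    rw [this]; exact hg
  · intro π x y hxy ih
    have hrw : P (Equiv.swap x y * π) * g = P (Equiv.swap x y) * (P π * g) := by
      funext t; simp only [mul_apply, P_apply]; simp
    have hs' : ¬ Function.Surjective (P π * g) := by
      intro hsurj
      apply hs
      intro b
      obtain ⟨a, ha⟩ := hsurj (π b)
      exact ⟨a, π.injective ha⟩
    rw [hrw]
    exact swap_mul_mem ih hs' x y

lemma singular_mem {f : Function.End (Fin n)} (hf : ¬ Function.Bijective f) : f ∈ M n := by
  classical
  have hni : ¬ Function.Injective f := by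
    intro hi
    exact hf ⟨hi, Finite.surjective_of_injective hi⟩
  -- the kernel idempotent: send `t` to the least element with the same image
  set k : Function.End (Fin n) :=
    (fun t => Finset.min' (Finset.univ.filter fun s => f s = f t)
      ⟨t, by simp⟩ : Fin n → Fin n) with hk_def
  have hk_eq : ∀ u v : Fin n, f u = f v → k u = k v := by
    intro u v huv
    simp only [hk_def, huv]
  have hfk : ∀ t, f (k t) = f t := by
    intro t
    have := Finset.min'_mem (Finset.univ.filter fun s => f s = f t) ⟨t, by simp⟩
    simpa [hk_def] using this
  have hk_idem : k * k = k := by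
    funext t
    rw [mul_apply]
    exact hk_eq (k t) t (hfk t)
  have hk_mem : k ∈ M n := Submonoid.subset_closure hk_idem
  have hk_nonsurj : ¬ Function.Surjective k := by
    rw [← Finite.injective_iff_surjective]
    obtain ⟨a, b, hab, hne⟩ := Function.not_injective_iff.mp hni
    intro hinj
    exact hne (hinj (hk_eq a b hab))
  -- f is injective on the image of k
  have hinjOn : Set.InjOn f ↑(Finset.univ.image k) := by
    intro s hsmem s' hs'mem hss'
    replace hsmem : ∃ u ∈ Finset.univ, k u = s := Finset.mem_image.mp hsmem
    replace hs'mem : ∃ v ∈ Finset.univ, k v = s' := Finset.mem_image.mp hs'mem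
    obtain ⟨u, _, rfl⟩ := hsmem
    obtain ⟨v, _, rfl⟩ := hs'mem
    have : f u = f v := by rw [← hfk u, ← hfk v]; exact hss'
    exact hk_eq u v this
  obtain ⟨g, hg⟩ := Finset.exists_equiv_extend_of_card_eq
    (t := (Finset.univ : Finset (Fin n)))
    (by simp) (Finset.image_subset_iff.mpr fun x _ => Finset.mem_univ _) hinjOn
  set σ : Equiv.Perm (Fin n) :=
    g.trans (Equiv.subtypeUnivEquiv fun x => Finset.mem_univ x) with hσ
  have hfactor : f = P σ * k := by
    funext t
    rw [mul_apply, P_apply]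
    have hkt : k t ∈ Finset.univ.image k := Finset.mem_image_of_mem k (Finset.mem_univ t)
    have : (σ (k t) : Fin n) = f (k t) := by
      simp only [hσ, Equiv.trans_apply, Equiv.subtypeUnivEquiv_apply]
      exact hg (k t) hkt
    rw [this, hfk]
  rw [hfactor]
  exact perm_mul_mem σ hk_mem hk_nonsurj

end HowieAux

/-- Howie's theorem: for `n ≥ 2`, the idempotent-generated submonoid of the full
transformation monoid `T_n` consists exactly of the identity together with the
non-bijective transformations. -/
theorem idempotent_generated_submonoid_Tn (n : ℕ) (hn : 2 ≤ n)
    (f : Function.End (Fin n)) :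
    f ∈ Submonoid.closure {e : Function.End (Fin n) | e * e = e} ↔
      (f = 1 ∨ ¬ Function.Bijective f) := by
  constructor
  · intro hf
    induction hf using Submonoid.closure_induction with
    | mem e he =>
      by_cases hb : Function.Bijective e
      · left
        funext t
        have h1 : e (e t) = e t := congrFun he t
        exact hb.injective h1
      · right; exact hb
    | one => left; rfl
    | mul a b _ _ ha hb =>
      rcases ha with rfl | ha
      · rwa [one_mul]
      · right
        intro hbij
        have hsurj' : Function.Surjective ((a : Fin n → Fin n) ∘ (b : Fin n → Fin n)) := hbij.surjective
        have hsurj : Function.Surjective a := Function.Surjective.of_comp hsurj'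
        exact ha ⟨Finite.injective_iff_surjective.mpr hsurj, hsurj⟩
  · rintro (rfl | hf)
    · exact one_mem _
    · exact HowieAux.singular_mem hf
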